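/- The set A = {2^n : n ∈ ℤ} is singly anticipated by the set B = {2^n : n ∈ ℤ, n ≤ 0}: every A-martingale is dominated by a B-martingale, even though no positive multiple of A is contained in the closure of B. -/

import Mathlib

/-- A martingale: a betting strategy on binary sequences. -/
def IsMartingale (M : List Bool → ℝ) : Prop :=
  ∀ σ : List Bool, M σ = (M (σ ++ [true]) + M (σ ++ [false])) / 2

/-- The increment (wager) of a martingale at a history `σ`. -/
def inc (M : List Bool → ℝ) (σ : List Bool) : ℝ := M (σ ++ [true]) - M σ

/-- An `A`-martingale: all absolute increments lie in `A`. -/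
def IsAMartingale (A : Set ℝ) (M : List Bool → ℝ) : Prop :=
  IsMartingale M ∧ ∀ σ : List Bool, |inc M σ| ∈ A

/-- The first `n` bits of an infinite binary sequence, as a list. -/
def pref (X : ℕ → Bool) (n : ℕ) : List Bool := (List.range n).map X

/-- `M` succeeds on `X`: its value tends to infinity and it never bets more than it has. -/
def Succeeds (M : List Bool → ℝ) (X : ℕ → Bool) : Prop :=
  Filter.Tendsto (fun n => M (pref X n)) Filter.atTop Filter.atTop ∧
  ∀ n : ℕ, |inc M (pref X n)| ≤ M (pref X n)

/-- `N` dominates `M`: `N` succeeds on every sequence on which `M` succeeds. -/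
def Dominates (N M : List Bool → ℝ) : Prop :=
  ∀ X : ℕ → Bool, Succeeds M X → Succeeds N X

/-- `B` singly anticipates `A`: every `A`-martingale is dominated by some `B`-martingale. -/
def SinglyAnticipates (B A : Set ℝ) : Prop :=
  ∀ M : List Bool → ℝ, IsAMartingale A M →
    ∃ N : List Bool → ℝ, IsAMartingale B N ∧ Dominates N M

/-- `B` (countably) anticipates `A`: every `A`-martingale is dominated by a countable
set of `B`-martingales. -/
def Anticipates (B A : Set ℝ) : Prop :=
  ∀ M : List Bool → ℝ, IsAMartingale A M →
    ∃ N : ℕ → List Bool → ℝ, (∀ i, IsAMartingale B (N i)) ∧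
      ∀ X : ℕ → Bool, Succeeds M X → ∃ i, Succeeds (N i) X

noncomputable section PowersOfTwoProof


/-- capped dyadic log -/
def mm (y : ℝ) : ℤ := max (Int.log 2 y) 0

/-- piecewise-linear surrogate for log₂ -/
def hh (y : ℝ) : ℝ := (mm y : ℝ) + y * (2:ℝ) ^ (-(mm y))

lemma mm_nonneg (y : ℝ) : 0 ≤ mm y := le_max_right _ _

lemma mm_mono {x y : ℝ} (hx : 0 < x) (hxy : x ≤ y) : mm x ≤ mm y :=
  max_le_max (Int.log_mono_right hx hxy) le_rfl

lemma hh_nonneg {y : ℝ} (hy : 0 ≤ y) : 0 ≤ hh y := by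
  have h1 : (0:ℝ) ≤ (mm y : ℝ) := by exact_mod_cast mm_nonneg y
  have h2 : (0:ℝ) ≤ y * (2:ℝ) ^ (-(mm y)) := by positivity
  simpa [hh] using add_nonneg h1 h2

lemma intlog_nonneg {x : ℝ} (h1 : 1 ≤ x) : 0 ≤ Int.log 2 x := by
  rw [Int.log_of_one_le_right _ h1]; positivity

lemma le_hh (y : ℝ) (hy : 0 ≤ y) : (mm y : ℝ) ≤ hh y := by
  have : (0:ℝ) ≤ y * (2:ℝ) ^ (-(mm y)) := by positivity
  simp only [hh]; linarith

lemma self_le_two_zpow {x : ℝ} (hx : 0 < x) : x ≤ (2:ℝ) ^ (mm x + 1) := by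
  rcases le_or_gt 1 x with h1 | h1
  · have : mm x = Int.log 2 x := max_eq_left (intlog_nonneg h1)
    rw [this]
    have := Int.lt_zpow_succ_log_self (by norm_num : 1 < 2) x
    push_cast at this ⊢
    exact this.le
  · have hl : Int.log 2 x ≤ 0 := by
      calc Int.log 2 x ≤ Int.log 2 1 := Int.log_mono_right hx h1.le
        _ = 0 := Int.log_one_right 2
    have : mm x = 0 := max_eq_right hl
    rw [this]; norm_num; linarith
lemma zpow_mm_le_self {y : ℝ} (hy : 1 ≤ Int.log 2 y) : (2:ℝ) ^ (mm y) ≤ y := by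
  have hy0 : (0:ℝ) < y := by
    by_contra h
    push_neg at h
    rw [Int.log_of_right_le_zero _ h] at hy; omega
  have : mm y = Int.log 2 y := max_eq_left (by omega)
  rw [this]
  have := Int.zpow_log_le_self (by norm_num : 1 < 2) hy0
  push_cast at this ⊢
  exact this

lemma int_le_two_zpow {d : ℤ} (hd : 0 ≤ d) : (d:ℝ) ≤ (2:ℝ)^d - 1 := by
  lift d to ℕ using hd
  rw [zpow_natCast]
  have := (Nat.lt_two_pow_self (n := d))
  have : (d:ℝ) + 1 ≤ ((2:ℝ))^d := by exact_mod_cast (Nat.lt_two_pow_self (n := d))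
  push_cast
  linarith

lemma two_le_aux {d : ℤ} (hd : 0 ≤ d) : 2 * (1 - (2:ℝ)^(-d)) ≤ (d:ℝ) := by
  rcases le_or_gt d 1 with h | h
  · interval_cases d <;> norm_num
  · have : (0:ℝ) ≤ (2:ℝ)^(-d) := by positivity
    have : (d:ℝ) ≥ 2 := by exact_mod_cast h
    linarith

/-- L1': lower slope bound -/
lemma le_hh_sub {x y : ℝ} (hx : 0 ≤ x) (hxy : x ≤ y) (hy : 0 < y) :
    (y - x) * (2:ℝ) ^ (-(mm y)) ≤ hh y - hh x := by
  rcases eq_or_lt_of_le hx with h0 | hx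
  · -- x = 0
    have hx0 : x = 0 := h0.symm
    subst hx0
    have hm0 : mm (0:ℝ) = 0 := by simp [mm]
    have hmy : (0:ℝ) ≤ (mm y : ℝ) := by exact_mod_cast mm_nonneg y
    have h0' : hh 0 = 0 := by rw [hh, hm0]; norm_num
    rw [h0']
    simp only [hh]
    rw [sub_zero, sub_zero]
    linarith
  · set d : ℤ := mm y - mm x with hd
    have hd0 : 0 ≤ d := by have := mm_mono hx hxy; omega
    have hxb : x ≤ (2:ℝ)^(mm x + 1) := self_le_two_zpow hx
    have h2 : x * (2:ℝ)^(-(mm x)) ≤ 2 := by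
      have hp : (0:ℝ) < (2:ℝ)^(-(mm x)) := by positivity
      calc x * (2:ℝ)^(-(mm x)) ≤ (2:ℝ)^(mm x + 1) * (2:ℝ)^(-(mm x)) := by
            exact mul_le_mul_of_nonneg_right hxb hp.le
        _ = 2 := by rw [← zpow_add₀ (by norm_num : (2:ℝ) ≠ 0)]; norm_num
    -- goal：(mm y - mm x) ≥ x*(2^{-mm x} - 2^{-mm y})
    have key : x * ((2:ℝ)^(-(mm x)) - (2:ℝ)^(-(mm y))) ≤ (d:ℝ) := by
      have hrw : (2:ℝ)^(-(mm y)) = (2:ℝ)^(-(mm x)) * (2:ℝ)^(-d) := by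
        rw [← zpow_add₀ (by norm_num : (2:ℝ) ≠ 0)]; congr 1; omega
      have h3 : x * ((2:ℝ)^(-(mm x)) - (2:ℝ)^(-(mm y)))
          = (x * (2:ℝ)^(-(mm x))) * (1 - (2:ℝ)^(-d)) := by rw [hrw]; ring
      have h4 : (0:ℝ) ≤ 1 - (2:ℝ)^(-d) := by
        have : (2:ℝ)^(-d) ≤ 1 := zpow_le_one_of_nonpos₀ (by norm_num) (by omega)
        linarith
      calc x * ((2:ℝ)^(-(mm x)) - (2:ℝ)^(-(mm y)))
          = (x * (2:ℝ)^(-(mm x))) * (1 - (2:ℝ)^(-d)) := h3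
        _ ≤ 2 * (1 - (2:ℝ)^(-d)) := mul_le_mul_of_nonneg_right h2 h4
        _ ≤ (d:ℝ) := two_le_aux hd0
    have hdc : (d:ℝ) = (mm y : ℝ) - (mm x : ℝ) := by push_cast [hd]; ring
    simp only [hh]
    nlinarith [key]

/-- L2': upper slope bound -/
lemma hh_sub_le {x y : ℝ} (hx : 0 < x) (hxy : x ≤ y) :
    hh y - hh x ≤ (y - x) * (2:ℝ) ^ (-(mm x)) := by
  set d : ℤ := mm y - mm x with hd
  have hy : 0 < y := lt_of_lt_of_le hx hxy
  have hd0 : 0 ≤ d := by have := mm_mono hx hxy; omega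
  have key : (d:ℝ) ≤ y * ((2:ℝ)^(-(mm x)) - (2:ℝ)^(-(mm y))) := by
    rcases eq_or_lt_of_le hd0 with h0 | hdpos
    · rw [← h0]
      have : mm x = mm y := by omega
      rw [this]; norm_num
    · -- d ≥ 1, so mm y ≥ 1, so Int.log 2 y ≥ 1
      have hmy : 1 ≤ mm y := by have := mm_nonneg x; omega
      have hly : 1 ≤ Int.log 2 y := by
        by_contra h
        push_neg at h
        have : mm y ≤ max 0 0 := by
          apply max_le_max (by omega) le_rfl
        simp at this; omega
      have hyl : (2:ℝ)^(mm y) ≤ y := zpow_mm_le_self hly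
      have h1 : (1:ℝ) ≤ y * (2:ℝ)^(-(mm y)) := by
        have hp : (0:ℝ) < (2:ℝ)^(-(mm y)) := by positivity
        have := mul_le_mul_of_nonneg_right hyl hp.le
        rw [← zpow_add₀ (by norm_num : (2:ℝ) ≠ 0)] at this
        simpa using this
      have hrw : (2:ℝ)^(-(mm x)) = (2:ℝ)^(-(mm y)) * (2:ℝ)^d := by
        rw [← zpow_add₀ (by norm_num : (2:ℝ) ≠ 0)]; congr 1; omega
      have h3 : y * ((2:ℝ)^(-(mm x)) - (2:ℝ)^(-(mm y)))
          = (y * (2:ℝ)^(-(mm y))) * ((2:ℝ)^d - 1) := by rw [hrw]; ring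
      have h4 : (0:ℝ) ≤ (2:ℝ)^d - 1 := by
        have : (1:ℝ) ≤ (2:ℝ)^d := one_le_zpow₀ (by norm_num) hd0
        linarith
      calc (d:ℝ) ≤ (2:ℝ)^d - 1 := int_le_two_zpow hd0
        _ = 1 * ((2:ℝ)^d - 1) := by ring
        _ ≤ (y * (2:ℝ)^(-(mm y))) * ((2:ℝ)^d - 1) := mul_le_mul_of_nonneg_right h1 h4
        _ = y * ((2:ℝ)^(-(mm x)) - (2:ℝ)^(-(mm y))) := h3.symm
  have hdc : (d:ℝ) = (mm y : ℝ) - (mm x : ℝ) := by push_cast [hd]; ring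
  simp only [hh]
  nlinarith [key]

namespace PW

variable (M : List Bool → ℝ)

/-- the exponent of N's wager -/
def ee (σ : List Bool) : ℤ := min (Int.log 2 |inc M σ| - mm (M σ)) 0
/-- N's wager -/
def vv (σ : List Bool) : ℝ := (2:ℝ) ^ ee M σ
/-- the signed amount N wins when the next bit is `true` -/
def step (σ : List Bool) : ℝ := Real.sign (inc M σ) * vv M σ
/-- the dominating martingale -/
def NN (σ : List Bool) : ℝ :=
  hh (M []) + 1 + ∑ i ∈ Finset.range σ.length,
    (if σ.getD i false then step M (σ.take i) else -(step M (σ.take i)))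

lemma vv_pos (σ : List Bool) : 0 < vv M σ := zpow_pos (by norm_num) _

lemma vv_le_one (σ : List Bool) : vv M σ ≤ 1 := by
  have : ee M σ ≤ 0 := min_le_right _ _
  simpa [vv] using zpow_le_one_of_nonpos₀ (by norm_num : (1:ℝ) ≤ 2) this

lemma NN_append (σ : List Bool) (b : Bool) :
    NN M (σ ++ [b]) = NN M σ + (if b then step M σ else -(step M σ)) := by
  simp only [NN, List.length_append, List.length_singleton, Finset.sum_range_succ]
  have h1 : ∀ i, i < σ.length →
      ((σ ++ [b]).getD i false = σ.getD i false ∧ (σ ++ [b]).take i = σ.take i) := by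
    intro i hi
    constructor
    · exact List.getD_append _ _ _ _ hi
    · exact List.take_append_of_le_length hi.le
  have h2 : (σ ++ [b]).getD σ.length false = b := by
    rw [List.getD_append_right _ _ _ _ le_rfl]
    simp
  have h3 : (σ ++ [b]).take σ.length = σ := List.take_left
  rw [h2, h3]
  have : ∑ i ∈ Finset.range σ.length,
      (if (σ ++ [b]).getD i false then step M ((σ ++ [b]).take i) else -(step M ((σ ++ [b]).take i)))
      = ∑ i ∈ Finset.range σ.length,
      (if σ.getD i false then step M (σ.take i) else -(step M (σ.take i))) := by
    apply Finset.sum_congr rfl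
    intro i hi
    have hi' := Finset.mem_range.mp hi
    rw [(h1 i hi').1, (h1 i hi').2]
  rw [this]
  ring

lemma inc_NN (σ : List Bool) : inc (NN M) σ = step M σ := by
  rw [inc, NN_append]; simp

lemma NN_martingale : IsMartingale (NN M) := by
  intro σ
  rw [NN_append, NN_append]
  simp only [if_true, Bool.false_eq_true, if_false]
  ring

lemma abs_inc_NN (hM : ∀ σ, inc M σ ≠ 0) (σ : List Bool) : |inc (NN M) σ| = vv M σ := by
  rw [inc_NN, step, abs_mul]
  rcases lt_trichotomy (inc M σ) 0 with h | h | h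
  · rw [Real.sign_of_neg h]
    simp [abs_of_pos (vv_pos M σ)]
  · exact absurd h (hM σ)
  · rw [Real.sign_of_pos h]
    simp [abs_of_pos (vv_pos M σ)]

lemma NN_isB (hM : ∀ σ, inc M σ ≠ 0) :
    IsAMartingale {x : ℝ | ∃ n : ℤ, n ≤ 0 ∧ x = 2 ^ n} (NN M) := by
  refine ⟨NN_martingale M, fun σ => ?_⟩
  rw [abs_inc_NN M hM σ]
  exact ⟨ee M σ, min_le_right _ _, rfl⟩

end PW

namespace PW2
open PW

lemma hne {M : List Bool → ℝ} (hM : IsAMartingale {x : ℝ | ∃ n : ℤ, x = 2 ^ n} M)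
    (σ : List Bool) : inc M σ ≠ 0 := by
  obtain ⟨k, hk⟩ := hM.2 σ
  intro h
  rw [h] at hk
  simp at hk
  exact absurd hk.symm (by positivity)

lemma pref_zero (X : ℕ → Bool) : pref X 0 = [] := by simp [pref]

lemma pref_succ (X : ℕ → Bool) (n : ℕ) : pref X (n + 1) = pref X n ++ [X n] := by
  simp [pref, List.range_succ]

lemma M_false {M : List Bool → ℝ} (hm : IsMartingale M) (σ : List Bool) :
    M (σ ++ [false]) = M σ - inc M σ := by
  have := hm σ
  rw [inc]; linarith

lemma M_true (M : List Bool → ℝ) (σ : List Bool) :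
    M (σ ++ [true]) = M σ + inc M σ := by
  rw [inc]; ring

variable {M : List Bool → ℝ} {X : ℕ → Bool}

lemma w_pos (hM : IsAMartingale {x : ℝ | ∃ n : ℤ, x = 2 ^ n} M) (σ : List Bool) :
    0 < |inc M σ| := abs_pos.mpr (hne hM σ)

lemma Mpos (hM : IsAMartingale {x : ℝ | ∃ n : ℤ, x = 2 ^ n} M) (hS : Succeeds M X)
    (n : ℕ) : 0 < M (pref X n) := lt_of_lt_of_le (w_pos hM _) (hS.2 n)

lemma vv_eq (hM : IsAMartingale {x : ℝ | ∃ n : ℤ, x = 2 ^ n} M) (hS : Succeeds M X)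
    (n : ℕ) :
    vv M (pref X n) = |inc M (pref X n)| * (2:ℝ) ^ (-(mm (M (pref X n)))) := by
  obtain ⟨k, hk⟩ := hM.2 (pref X n)
  have hy : 0 < M (pref X n) := Mpos hM hS n
  have hlog : Int.log 2 |inc M (pref X n)| = k := by
    have h0 := Int.log_zpow (R := ℝ) (b := 2) (by norm_num : 1 < 2) k
    push_cast at h0
    rw [hk]
    exact h0
  have hkle : k ≤ mm (M (pref X n)) := by
    have h1 : ((2:ℕ):ℝ) ^ k ≤ M (pref X n) := by
      push_cast
      rw [← hk]; exact hS.2 n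
    have := (Int.zpow_le_iff_le_log (by norm_num : 1 < 2) hy).mp h1
    exact this.trans (le_max_left _ _)
  have hee : ee M (pref X n) = k - mm (M (pref X n)) := by
    rw [ee, hlog]
    exact min_eq_left (by omega)
  rw [vv, hee, hk, ← zpow_add₀ (by norm_num : (2:ℝ) ≠ 0)]
  ring_nf

/-- The key invariant along the path. -/
lemma invariant (hM : IsAMartingale {x : ℝ | ∃ n : ℤ, x = 2 ^ n} M) (hS : Succeeds M X)
    (n : ℕ) : hh (M (pref X n)) + 1 ≤ NN M (pref X n) := by
  induction n with
  | zero =>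
    rw [pref_zero]
    simp [NN]
  | succ n ih =>
    have hy0 : 0 < M (pref X n) := Mpos hM hS n
    have hwy : |inc M (pref X n)| ≤ M (pref X n) := hS.2 n
    have hw0 : 0 < |inc M (pref X n)| := w_pos hM _
    have hveq : vv M (pref X n) = |inc M (pref X n)| * (2:ℝ) ^ (-(mm (M (pref X n)))) :=
      vv_eq hM hS n
    have kup : hh (M (pref X n) + |inc M (pref X n)|) ≤ hh (M (pref X n)) + vv M (pref X n) := by
      have := hh_sub_le (x := M (pref X n)) (y := M (pref X n) + |inc M (pref X n)|)
        hy0 (by linarith)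
      rw [hveq]
      have h2 : (M (pref X n) + |inc M (pref X n)| - M (pref X n)) = |inc M (pref X n)| := by ring
      rw [h2] at this
      linarith
    have kdn : hh (M (pref X n) - |inc M (pref X n)|) ≤ hh (M (pref X n)) - vv M (pref X n) := by
      have := le_hh_sub (x := M (pref X n) - |inc M (pref X n)|) (y := M (pref X n))
        (by linarith) (by linarith) hy0
      rw [hveq]
      have h2 : (M (pref X n) - (M (pref X n) - |inc M (pref X n)|)) = |inc M (pref X n)| := by
        ring
      rw [h2] at this
      linarith
    rw [pref_succ, NN_append]
    rcases lt_trichotomy (inc M (pref X n)) 0 with hs | hs | hs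
    · have hstep : step M (pref X n) = -vv M (pref X n) := by
        rw [step, Real.sign_of_neg hs]; ring
      have hinc : inc M (pref X n) = -|inc M (pref X n)| := by rw [abs_of_neg hs]; ring
      cases hX : X n with
      | true =>
        rw [if_pos rfl, hstep, M_true M (pref X n), hinc]
        rw [show M (pref X n) + -|inc M (pref X n)| = M (pref X n) - |inc M (pref X n)| by ring]
        linarith
      | false =>
        rw [if_neg (by simp), hstep, M_false hM.1 (pref X n), hinc]
        rw [show M (pref X n) - -|inc M (pref X n)| = M (pref X n) + |inc M (pref X n)| by ring]
        linarith
    · exact absurd hs (hne hM _)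
    · have hstep : step M (pref X n) = vv M (pref X n) := by
        rw [step, Real.sign_of_pos hs]; ring
      have hinc : inc M (pref X n) = |inc M (pref X n)| := (abs_of_pos hs).symm
      cases hX : X n with
      | true =>
        rw [if_pos rfl, hstep, M_true M (pref X n), hinc]
        linarith [kup, ih]
      | false =>
        rw [if_neg (by simp), hstep, M_false hM.1 (pref X n)]
        have h3 : hh (M (pref X n) - inc M (pref X n)) ≤ hh (M (pref X n)) - vv M (pref X n) := by
          rw [hinc]; exact kdn
        linarith

lemma NN_succeeds (hM : IsAMartingale {x : ℝ | ∃ n : ℤ, x = 2 ^ n} M) (hS : Succeeds M X) :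
    Succeeds (NN M) X := by
  constructor
  · rw [Filter.tendsto_atTop]
    intro b
    have h1 : ∀ᶠ n in Filter.atTop, ((2:ℕ):ℝ) ^ (⌈b⌉ : ℤ) ≤ M (pref X n) :=
      (Filter.tendsto_atTop.mp hS.1) _
    filter_upwards [h1] with n hn
    have hy0 : 0 < M (pref X n) := Mpos hM hS n
    have h2 : (⌈b⌉ : ℤ) ≤ Int.log 2 (M (pref X n)) :=
      (Int.zpow_le_iff_le_log (by norm_num : 1 < 2) hy0).mp hn
    have h3 : (⌈b⌉ : ℤ) ≤ mm (M (pref X n)) := h2.trans (le_max_left _ _)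
    have h4 : (mm (M (pref X n)) : ℝ) ≤ hh (M (pref X n)) := le_hh _ hy0.le
    have h5 := invariant hM hS n
    have h6 : (b : ℝ) ≤ (⌈b⌉ : ℤ) := Int.le_ceil b
    have h7 : ((⌈b⌉ : ℤ) : ℝ) ≤ (mm (M (pref X n)) : ℝ) := by exact_mod_cast h3
    linarith
  · intro n
    rw [abs_inc_NN M (hne hM)]
    have h1 : vv M (pref X n) ≤ 1 := vv_le_one M _
    have h2 := invariant hM hS n
    have h3 : 0 ≤ hh (M (pref X n)) := hh_nonneg (Mpos hM hS n).le
    linarith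

end PW2

end PowersOfTwoProof

/-- `B = {2 ^ n : n ≤ 0}` singly anticipates `A = {2 ^ n : n ∈ ℤ}`, even though no
positive multiple of `A` is contained in the closure of `B`. -/
theorem powers_of_two_example :
    SinglyAnticipates {x : ℝ | ∃ n : ℤ, n ≤ 0 ∧ x = 2 ^ n} {x : ℝ | ∃ n : ℤ, x = 2 ^ n} ∧
    ∀ r : ℝ, 0 < r →
      ¬ ((fun a => r * a) '' {x : ℝ | ∃ n : ℤ, x = 2 ^ n} ⊆
        closure {x : ℝ | ∃ n : ℤ, n ≤ 0 ∧ x = 2 ^ n}) := by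
  constructor
  · intro M hM
    exact ⟨PW.NN M, PW.NN_isB M (PW2.hne hM), fun X hS => PW2.NN_succeeds hM hS⟩
  · intro r hr hsub
    obtain ⟨n, hn⟩ := pow_unbounded_of_one_lt (1 / r) (by norm_num : (1:ℝ) < 2)
    have hmem : r * (2:ℝ) ^ (n : ℤ) ∈
        (fun a => r * a) '' {x : ℝ | ∃ m : ℤ, x = 2 ^ m} :=
      ⟨(2:ℝ) ^ (n : ℤ), ⟨(n : ℤ), rfl⟩, rfl⟩
    have hsubIcc : closure {x : ℝ | ∃ m : ℤ, m ≤ 0 ∧ x = 2 ^ m} ⊆ Set.Icc (0:ℝ) 1 := by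
      apply closure_minimal _ isClosed_Icc
      rintro x ⟨m, hm, rfl⟩
      constructor
      · positivity
      · exact zpow_le_one_of_nonpos₀ (by norm_num) hm
    have hcl := hsubIcc (hsub hmem)
    have hx1 : r * (2:ℝ) ^ (n : ℤ) ≤ 1 := hcl.2
    have h2 : (1:ℝ) < r * (2:ℝ) ^ (n : ℤ) := by
      rw [zpow_natCast]
      rw [div_lt_iff₀ hr] at hn
      calc (1:ℝ) < (2:ℝ) ^ n * r := by linarith
        _ = r * (2:ℝ) ^ n := by ring
    linarith
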